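/- Let L be a quadratic extension of F where |F| = p^n, and let s be coprime to p^{2n}-1 with s ≡ 1 (mod p^n - 1). Then for any fixed b ∈ L^× with b ∉ F, Σ_{a∈F} W_{L,s}(ab) = 0. -/

import Mathlib

open scoped BigOperators

/-- The Weil sum `W_{F,s}(a) = ∑_{x ∈ F} μ(x^s - a x)`, where `μ` is the canonical
additive character `μ(x) = ζ_p^{Tr_{F/𝔽_p}(x)}` of the finite field `F`. -/
noncomputable def weilSum (p : ℕ) (F : Type) [Field F] [Fintype F]
    [Algebra (ZMod p) F] (s : ℕ) (a : F) : ℂ :=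
  ∑ x : F, Complex.exp (2 * Real.pi * Complex.I *
    ((Algebra.trace (ZMod p) F (x ^ s - a * x)).val : ℂ) / (p : ℂ))

/-- if `L/F` is quadratic, `gcd(s, p^{2n}-1) = 1`, `s ≡ 1 (mod p^n-1)`,
and `b ∈ L^×` with `b ∉ F`, then `∑_{a ∈ F} W_{L,s}(ab) = 0`. -/
theorem weil_sum_orbit_sum_nonrational (p n : ℕ) [Fact p.Prime] (hn : 0 < n)
    (F L : Type) [Field F] [Fintype F] [Field L] [Fintype L]
    [Algebra (ZMod p) L] [Algebra F L]
    (hF : Fintype.card F = p ^ n) (hL : Fintype.card L = p ^ (2 * n))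
    (s : ℕ) (hs0 : 0 < s) (hs : Nat.Coprime s (p ^ (2 * n) - 1))
    (hs1 : s ≡ 1 [MOD p ^ n - 1])
    (b : L) (hb : b ≠ 0) (hbF : b ∉ Set.range (algebraMap F L)) :
    ∑ a : F, weilSum p L s (algebraMap F L a * b) = 0 := by
  classical
  have hp : p.Prime := Fact.out
  haveI : NeZero p := ⟨hp.ne_zero⟩
  haveI : CharP L p := charP_of_injective_algebraMap (algebraMap (ZMod p) L).injective p
  haveI : CharP F p := (algebraMap F L).charP (algebraMap F L).injective p
  letI : Algebra (ZMod p) F := ZMod.algebra F p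
  haveI : IsScalarTower (ZMod p) F L := IsScalarTower.of_algebraMap_eq' (RingHom.ext_zmod _ _)
  set q : ℕ := p ^ n with hqdef
  have hq1 : 1 < q := Nat.one_lt_pow hn.ne' hp.one_lt
  have hLq : Fintype.card L = q ^ 2 := by rw [hL, hqdef, ← pow_mul, mul_comm n 2]
  have hpC : (p : ℂ) ≠ 0 := Nat.cast_ne_zero.mpr hp.ne_zero
  -- the standard character on `ZMod p`
  set ζ : ℂ := Complex.exp (2 * Real.pi * Complex.I / p) with hζdef
  have hζroot : IsPrimitiveRoot ζ p := Complex.isPrimitiveRoot_exp p hp.ne_zero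
  have hζ : ζ ^ p = 1 := hζroot.pow_eq_one
  set e : AddChar (ZMod p) ℂ := AddChar.zmodChar p hζ with hedef
  have ePrim : e.IsPrimitive := by
    have := AddChar.zmodChar_primitive_of_primitive_root p hζroot
    exact this
  have e_eq_one : ∀ t : ZMod p, e t = 1 ↔ t = 0 := fun t =>
    ePrim.zmod_char_eq_one_iff p t
  -- the canonical characters of `L` and `F`
  set ψL : AddChar L ℂ := e.compAddMonoidHom (Algebra.trace (ZMod p) L).toAddMonoidHom
    with hψLdef
  set ψF : AddChar F ℂ := e.compAddMonoidHom (Algebra.trace (ZMod p) F).toAddMonoidHom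
    with hψFdef
  have expζ : ∀ v : ℕ, Complex.exp (2 * Real.pi * Complex.I * v / p) = ζ ^ v := by
    intro v
    rw [hζdef, ← Complex.exp_nat_mul]
    congr 1
    ring
  have hψLapp : ∀ y : L, ψL y = ζ ^ (Algebra.trace (ZMod p) L y).val := by
    intro y
    rw [hψLdef]
    rfl
  have hψFapp : ∀ y : F, ψF y = ζ ^ (Algebra.trace (ZMod p) F y).val := by
    intro y
    rw [hψFdef]
    rfl
  have hweil : ∀ a : L, weilSum p L s a = ∑ x : L, ψL (x ^ s - a * x) := by
    intro a
    unfold weilSum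
    refine Finset.sum_congr rfl fun x _ => ?_
    rw [expζ, hψLapp]
  -- primitivity of ψF
  have hψF1 : ψF ≠ 1 := by
    obtain ⟨u, hu⟩ := Algebra.trace_surjective (ZMod p) F 1
    refine AddChar.ne_one_iff.mpr ⟨u, fun hfa => ?_⟩
    rw [hψFdef] at hfa
    simp only [AddChar.compAddMonoidHom_apply, LinearMap.toAddMonoidHom_coe] at hfa
    rw [e_eq_one, hu] at hfa
    exact one_ne_zero hfa
  have ψFprim : ψF.IsPrimitive := AddChar.IsPrimitive.of_ne_one hψF1
  -- the key character sum over F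
  have Schar : ∀ c : L, ∑ a : F, ψL (algebraMap F L a * c) =
      if Algebra.trace F L c = 0 then (Fintype.card F : ℂ) else 0 := by
    intro c
    have key : ∀ a : F, ψL (algebraMap F L a * c) = ψF (a * Algebra.trace F L c) := by
      intro a
      simp only [hψLdef, hψFdef, AddChar.compAddMonoidHom_apply,
        LinearMap.toAddMonoidHom_coe]
      congr 1
      rw [← Algebra.trace_trace (S := F) (T := L) (x := algebraMap F L a * c)]
      congr 1
      rw [← Algebra.smul_def, map_smul, smul_eq_mul]
    rw [Finset.sum_congr rfl fun a _ => key a, AddChar.sum_mulShift _ ψFprim]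
    split_ifs <;> simp
  -- Frobenius
  haveI : ExpChar L p := ExpChar.prime hp
  let σhom : L →ₐ[F] L :=
    { iterateFrobenius L p n with
      commutes' := fun a => by
        show (algebraMap F L a) ^ p ^ n = algebraMap F L a
        rw [← map_pow]
        congr 1
        rw [← hqdef, ← hF]
        exact FiniteField.pow_card a }
  have σbij : Function.Bijective σhom :=
    Finite.injective_iff_bijective.mp σhom.toRingHom.injective
  let σ : L ≃ₐ[F] L := AlgEquiv.ofBijective σhom σbij
  have σapp : ∀ x : L, σ x = x ^ q := fun x => rfl
  -- fixed points of x ↦ x^q are exactly the image of F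
  have hfix : ∀ x : L, x ^ q = x ↔ x ∈ Set.range (algebraMap F L) := by
    have himg_card : (Finset.univ.image (algebraMap F L)).card = q := by
      rw [Finset.card_image_of_injective _ (algebraMap F L).injective,
        Finset.card_univ, hF]
    set T : Finset L := Finset.univ.filter (fun x => x ^ q = x) with hT
    have hsub : Finset.univ.image (algebraMap F L) ⊆ T := by
      intro x hx
      simp only [Finset.mem_image] at hx
      obtain ⟨a, -, rfl⟩ := hx
      simp only [hT, Finset.mem_filter, Finset.mem_univ, true_and]
      rw [← map_pow, ← hF, FiniteField.pow_card]
    have hdlt : (Polynomial.X : Polynomial L).degree < (Polynomial.X ^ q : Polynomial L).degree := by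
      rw [Polynomial.degree_X, Polynomial.degree_X_pow]
      exact_mod_cast hq1
    have hpoly : (Polynomial.X ^ q - Polynomial.X : Polynomial L).degree = q := by
      rw [Polynomial.degree_sub_eq_left_of_degree_lt hdlt, Polynomial.degree_X_pow]
    have hpne : (Polynomial.X ^ q - Polynomial.X : Polynomial L) ≠ 0 := by
      intro h0
      rw [h0, Polynomial.degree_zero] at hpoly
      exact absurd hpoly (by simp)
    have hTcard : T.card ≤ q := by
      have hsub2 : T ⊆ (Polynomial.X ^ q - Polynomial.X : Polynomial L).roots.toFinset := by
        intro x hx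
        simp only [hT, Finset.mem_filter, Finset.mem_univ, true_and] at hx
        rw [Multiset.mem_toFinset, Polynomial.mem_roots hpne]
        simp [Polynomial.IsRoot, hx, sub_eq_zero]
      calc T.card ≤ _ := Finset.card_le_card hsub2
        _ ≤ (Polynomial.X ^ q - Polynomial.X : Polynomial L).roots.card :=
            Multiset.toFinset_card_le _
        _ ≤ (Polynomial.X ^ q - Polynomial.X : Polynomial L).natDegree :=
            Polynomial.card_roots' _
        _ = q := Polynomial.natDegree_eq_of_degree_eq_some hpoly
    have hTeq : Finset.univ.image (algebraMap F L) = T :=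
      Finset.eq_of_subset_of_card_le hsub (himg_card ▸ hTcard)
    intro x
    constructor
    · intro hx
      have : x ∈ T := by
        simp only [hT, Finset.mem_filter, Finset.mem_univ, true_and]; exact hx
      rw [← hTeq] at this
      simp only [Finset.mem_image] at this
      obtain ⟨a, -, rfl⟩ := this
      exact ⟨a, rfl⟩
    · rintro ⟨a, rfl⟩
      rw [← map_pow, ← hF, FiniteField.pow_card]
  -- finrank
  have hrank : Module.finrank F L = 2 := by
    have hcard := Module.card_eq_pow_finrank (K := F) (V := L)
    rw [hF, hLq] at hcard
    have := Nat.pow_right_injective hq1 hcard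
    omega
  -- the Galois group is {1, σ}
  have hσne : σ ≠ 1 := by
    intro h
    have hbq : b ^ q = b := by
      rw [← σapp b, h]; rfl
    exact hbF ((hfix b).mp hbq)
  have hcard2 : Fintype.card (L ≃ₐ[F] L) = 2 := by
    rw [← Nat.card_eq_fintype_card, IsGalois.card_aut_eq_finrank, hrank]
  have huniv : (Finset.univ : Finset (L ≃ₐ[F] L)) = {1, σ} := by
    symm
    apply Finset.eq_of_subset_of_card_le (Finset.subset_univ _)
    rw [Finset.card_univ, hcard2, Finset.card_insert_of_notMem
      (by simpa using hσne.symm), Finset.card_singleton]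
  -- the trace formula
  have htr0 : ∀ x : L, Algebra.trace F L x = 0 ↔ x + x ^ q = 0 := by
    intro x
    have htr : algebraMap F L (Algebra.trace F L x) = x + x ^ q := by
      rw [trace_eq_sum_automorphisms, huniv, Finset.sum_pair (by simpa using hσne.symm)]
      rw [σapp]
      rfl
    rw [← htr, map_eq_zero_iff _ (algebraMap F L).injective]
  -- a^s = a on F
  obtain ⟨k, hk⟩ : (q - 1) ∣ (s - 1) := (Nat.modEq_iff_dvd' hs0).mp hs1.symm
  have hpowF : ∀ a : F, a ^ s = a := by
    intro a
    rcases eq_or_ne a 0 with rfl | ha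
    · exact zero_pow hs0.ne'
    · have hs' : s = 1 + (q - 1) * k := by omega
      rw [hs', pow_add, pow_one, pow_mul]
      rw [show q - 1 = Fintype.card F - 1 by rw [hF]]
      rw [FiniteField.pow_card_sub_one_eq_one a ha, one_pow, mul_one]
  -- the kernel of x ↦ Tr(b x)
  let D : L →ₗ[F] F := (Algebra.trace F L) ∘ₗ (LinearMap.mulLeft F b)
  have hDapp : ∀ x : L, D x = Algebra.trace F L (b * x) := fun x => rfl
  have hrange : LinearMap.range D = ⊤ := by
    obtain ⟨y, hy⟩ := Algebra.trace_surjective F L 1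
    rw [Submodule.eq_top_iff']
    intro t
    have h1 : (1 : F) ∈ LinearMap.range D := by
      refine ⟨b⁻¹ * y, ?_⟩
      rw [hDapp, ← mul_assoc, mul_inv_cancel₀ hb, one_mul, hy]
    simpa using Submodule.smul_mem _ t h1
  have hkerrank : Module.finrank F (LinearMap.ker D) = 1 := by
    have := LinearMap.finrank_range_add_finrank_ker D
    rw [hrange, finrank_top, hrank, Module.finrank_self] at this
    omega
  obtain ⟨x₀, hx₀mem, hx₀⟩ : ∃ x₀ ∈ LinearMap.ker D, x₀ ≠ 0 := by
    have : LinearMap.ker D ≠ ⊥ := by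
      intro h
      rw [h, finrank_bot] at hkerrank
      omega
    obtain ⟨x₀, h1, h2⟩ := Submodule.exists_mem_ne_zero_of_ne_bot this
    exact ⟨x₀, h1, h2⟩
  have hker : LinearMap.ker D = Submodule.span F {x₀} := by
    symm
    apply Submodule.eq_of_le_of_finrank_le
    · rw [Submodule.span_le, Set.singleton_subset_iff]; exact hx₀mem
    · rw [hkerrank, finrank_span_singleton hx₀]
  have hx₀tr : Algebra.trace F L (b * x₀) = 0 := hx₀mem
  have hkermem : ∀ x : L, Algebra.trace F L (b * x) = 0 ↔
      ∃ a : F, algebraMap F L a * x₀ = x := by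
    intro x
    rw [← hDapp, ← LinearMap.mem_ker, hker, Submodule.mem_span_singleton]
    simp_rw [Algebra.smul_def]
  -- trace of x₀^s is nonzero
  have htrx₀s : Algebra.trace F L (x₀ ^ s) ≠ 0 := by
    intro h0
    have h1 : x₀ ^ s + (x₀ ^ s) ^ q = 0 := (htr0 _).mp h0
    have h2 : b * x₀ + (b * x₀) ^ q = 0 := (htr0 _).mp hx₀tr
    have h3 : b ^ q * x₀ ^ q = -(b * x₀) := by
      rw [← mul_pow]
      exact eq_neg_of_add_eq_zero_right h2
    have h4 : (x₀ ^ q) ^ s = -(x₀ ^ s) := by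
      have h4' := eq_neg_of_add_eq_zero_right h1
      rw [pow_right_comm] at h4'
      exact h4'
    have h5 : (b ^ q) ^ s * (x₀ ^ q) ^ s = (-1 : L) ^ s * (b ^ s * x₀ ^ s) := by
      rw [← mul_pow, h3, neg_eq_neg_one_mul (b * x₀), mul_pow, mul_pow]
    have hm1 : ((-1 : L)) ^ s = -1 := by
      rcases hp.eq_two_or_odd' with h2' | hodd
      · have hneg : (-1 : L) = 1 := by
          haveI : CharP L 2 := by rw [← h2']; infer_instance
          exact CharTwo.neg_eq 1
        rw [hneg, one_pow]
      · have hodd2 : Odd s := by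
          rcases Nat.even_or_odd s with he | ho
          · exfalso
            have h2d : 2 ∣ p ^ (2 * n) - 1 := by
              obtain ⟨m, hm⟩ := hodd.pow (n := 2 * n)
              omega
            have hgcd : Nat.gcd s (p ^ (2 * n) - 1) = 1 := hs
            have hdd : (2 : ℕ) ∣ 1 := hgcd ▸ Nat.dvd_gcd he.two_dvd h2d
            omega
          · exact ho
        exact hodd2.neg_one_pow
    rw [h4, hm1] at h5
    have hx₀s : x₀ ^ s ≠ 0 := pow_ne_zero _ hx₀
    have h5' : (b ^ q) ^ s * x₀ ^ s = b ^ s * x₀ ^ s := by linear_combination -h5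
    have h6 : (b ^ q) ^ s = b ^ s := mul_right_cancel₀ hx₀s h5'
    have hqq : (q - 1) * s + s = q * s := by
      have hle : s ≤ q * s := Nat.le_mul_of_pos_left s (by omega)
      rw [Nat.sub_mul, one_mul, Nat.sub_add_cancel hle]
    have h8 : b ^ ((q - 1) * s) = 1 := by
      have hcan : b ^ ((q - 1) * s) * b ^ s = 1 * b ^ s := by
        rw [one_mul, ← pow_add, hqq, pow_mul, h6]
      exact mul_right_cancel₀ (pow_ne_zero _ hb) hcan
    have hgs : (b ^ (q - 1)) ^ s = 1 := by rw [← pow_mul]; exact h8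
    have hgq : (b ^ (q - 1)) ^ (p ^ (2 * n) - 1) = 1 := by
      have hb1 : b ^ (p ^ (2 * n) - 1) = 1 := by
        rw [show p ^ (2 * n) - 1 = Fintype.card L - 1 by rw [hL]]
        exact FiniteField.pow_card_sub_one_eq_one b hb
      rw [← pow_mul, mul_comm (q - 1) (p ^ (2 * n) - 1), pow_mul, hb1, one_pow]
    have hord : orderOf (b ^ (q - 1)) ∣ Nat.gcd s (p ^ (2 * n) - 1) :=
      Nat.dvd_gcd (orderOf_dvd_of_pow_eq_one hgs) (orderOf_dvd_of_pow_eq_one hgq)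
    have hgcd : Nat.gcd s (p ^ (2 * n) - 1) = 1 := hs
    rw [hgcd] at hord
    have hbq1 : b ^ (q - 1) = 1 := orderOf_eq_one_iff.mp (Nat.dvd_one.mp hord)
    have hbq : b ^ q = b := by
      have h9 : b ^ (q - 1) * b = b := by rw [hbq1, one_mul]
      rwa [← pow_succ, show q - 1 + 1 = q from by omega] at h9
    exact hbF ((hfix b).mp hbq)
  -- the main computation
  calc ∑ a : F, weilSum p L s (algebraMap F L a * b)
      = ∑ a : F, ∑ x : L, ψL (x ^ s - algebraMap F L a * b * x) :=
        Finset.sum_congr rfl fun a _ => hweil _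
    _ = ∑ x : L, ∑ a : F, ψL (x ^ s) * ψL (algebraMap F L a * -(b * x)) := by
        rw [Finset.sum_comm]
        refine Finset.sum_congr rfl fun x _ => Finset.sum_congr rfl fun a _ => ?_
        rw [← AddChar.map_add_eq_mul]
        congr 1
        ring
    _ = ∑ x : L, ψL (x ^ s) * ∑ a : F, ψL (algebraMap F L a * -(b * x)) := by
        refine Finset.sum_congr rfl fun x _ => ?_
        rw [Finset.mul_sum]
    _ = ∑ x : L, (if Algebra.trace F L (b * x) = 0
          then ψL (x ^ s) * (Fintype.card F : ℂ) else 0) := by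
        refine Finset.sum_congr rfl fun x _ => ?_
        rw [Schar, map_neg, neg_eq_zero]
        split_ifs <;> simp
    _ = ∑ x ∈ Finset.univ.filter (fun x : L => Algebra.trace F L (b * x) = 0),
          ψL (x ^ s) * (Fintype.card F : ℂ) := by
        rw [Finset.sum_filter]
    _ = ∑ a : F, ψL ((algebraMap F L a * x₀) ^ s) * (Fintype.card F : ℂ) := by
        symm
        refine Finset.sum_bij (fun a _ => algebraMap F L a * x₀) ?_ ?_ ?_ ?_
        · intro a _
          simp only [Finset.mem_filter, Finset.mem_univ, true_and]
          rw [show b * (algebraMap F L a * x₀) = algebraMap F L a * (b * x₀) by ring,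
            ← Algebra.smul_def, map_smul, hx₀tr, smul_zero]
        · intro a _ a' _ h
          exact (algebraMap F L).injective (mul_right_cancel₀ hx₀ h)
        · intro x hx
          simp only [Finset.mem_filter, Finset.mem_univ, true_and] at hx
          obtain ⟨a, ha⟩ := (hkermem x).mp hx
          exact ⟨a, Finset.mem_univ a, ha⟩
        · intro a _
          rfl
    _ = ∑ a : F, ψL (algebraMap F L a * x₀ ^ s) * (Fintype.card F : ℂ) := by
        refine Finset.sum_congr rfl fun a _ => ?_
        rw [mul_pow, ← map_pow, hpowF]
    _ = (∑ a : F, ψL (algebraMap F L a * x₀ ^ s)) * (Fintype.card F : ℂ) := by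
        rw [Finset.sum_mul]
    _ = 0 := by
        rw [Schar, if_neg htrx₀s, zero_mul]
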